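/- Fix ρ ∈ (0,1) and set μ* := min{ρ,1−ρ}. For G ∈ X¹_{μ,χ} define A_ρ(G)(q) := −(1−ρ) ∫_q^∞ ∫_p^∞ (G'(r)/r) dr dp. Then for every μ ∈ [0,μ*) and every χ > 0 there is a constant C > 0 such that for all G ∈ X¹_{μ,χ}: the iterated integral defining A_ρ(G)(q) converges for every q ≥ 0, A_ρ(G) ∈ X²_{μ,χ}, and ‖A_ρ(G)‖_{2,μ,χ} ≤ C ‖G‖_{1,μ,χ}. -/

import Mathlib

open MeasureTheory Set Filter

noncomputable section

/-- Ambient smoothness class: continuous on `[0,∞)` and `C²` on `(0,∞)`. -/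
def Smooth2 (G : ℝ → ℝ) : Prop :=
  ContinuousOn G (Set.Ici 0) ∧
  (∀ x ∈ Set.Ioi (0:ℝ), DifferentiableAt ℝ G x) ∧
  (∀ x ∈ Set.Ioi (0:ℝ), DifferentiableAt ℝ (deriv G) x)

/-- The weighted quantity `(1+q)^{χ+μ+ρ} q^{k-ρ-μ} |G^{(k)}(q)|`. -/
def wq (ρ : ℝ) (k : ℕ) (μ χ : ℝ) (G : ℝ → ℝ) (q : ℝ) : ℝ :=
  (1 + q) ^ (χ + μ + ρ) * q ^ ((k:ℝ) - ρ - μ) * |deriv^[k] G q|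

/-- The seminorm `⌈G⌉_{k,μ,χ}`.  Note that `semN ρ 0 (-ρ) χ G` is exactly
`sup_{q>0} (1+q)^χ |G(q)| = ‖G‖_{0,χ}`. -/
def semN (ρ : ℝ) (k : ℕ) (μ χ : ℝ) (G : ℝ → ℝ) : ℝ :=
  ⨆ q : Set.Ioi (0:ℝ), wq ρ k μ χ G (q : ℝ)

/-- The norm `‖G‖_{k,μ,χ} = ‖G‖_{0,χ} + Σ_{ℓ=1}^k ⌈G⌉_{ℓ,μ,χ}`. -/
def fullN (ρ : ℝ) (k : ℕ) (μ χ : ℝ) (G : ℝ → ℝ) : ℝ :=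
  semN ρ 0 (-ρ) χ G + ∑ ℓ ∈ Finset.Icc 1 k, semN ρ ℓ μ χ G

/-- Membership in the space `X^k_{μ,χ}`: smoothness plus finiteness of the norm. -/
def MemX (ρ : ℝ) (k : ℕ) (μ χ : ℝ) (G : ℝ → ℝ) : Prop :=
  Smooth2 G ∧
  (∃ M : ℝ, ∀ q : ℝ, 0 < q → wq ρ 0 (-ρ) χ G q ≤ M) ∧
  ∀ ℓ ∈ Finset.Icc 1 k, ∃ M : ℝ, ∀ q : ℝ, 0 < q → wq ρ ℓ μ χ G q ≤ M

/-- The operator `A_ρ(G)(q) = -(1-ρ) ∫_q^∞ ∫_p^∞ G'(r)/r dr dp`. -/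
def Arho (ρ : ℝ) (G : ℝ → ℝ) (q : ℝ) : ℝ :=
  -(1 - ρ) * ∫ p in Set.Ioi q, ∫ r in Set.Ioi p, deriv G r / r

open Topology

set_option maxHeartbeats 1000000

lemma tail_split (f : ℝ → ℝ) {a b : ℝ} (hab : a ≤ b)
    (hi : IntegrableOn f (Ioi a)) :
    ∫ r in Ioi a, f r = (∫ r in Ioc a b, f r) + ∫ r in Ioi b, f r := by
  rw [← Ioc_union_Ioi_eq_Ioi hab,
    setIntegral_union (Ioc_disjoint_Ioi le_rfl) measurableSet_Ioi
      (hi.mono_set (by rw [← Ioc_union_Ioi_eq_Ioi hab]; exact subset_union_left))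
      (hi.mono_set (by rw [← Ioc_union_Ioi_eq_Ioi hab]; exact subset_union_right))]

lemma tail_hasDerivAt (f : ℝ → ℝ) (hc : ContinuousOn f (Ioi 0))
    (hi : ∀ a : ℝ, 0 < a → IntegrableOn f (Ioi a)) {p : ℝ} (hp : 0 < p) :
    HasDerivAt (fun q => ∫ r in Ioi q, f r) (-f p) p := by
  set c := p / 2 with hc_def
  have hcp : 0 < c := by positivity
  have key : ∀ q, 0 < q →
      ∫ r in Ioi q, f r = (∫ r in Ioi c, f r) - ∫ t in c..q, f t := by
    intro q hq
    rcases le_total c q with h | h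
    · rw [intervalIntegral.integral_of_le h, tail_split f h (hi c hcp)]; ring
    · rw [intervalIntegral.integral_symm, intervalIntegral.integral_of_le h,
        tail_split f h (hi q hq)]; ring
  have hint : IntervalIntegrable f volume c p := by
    rw [intervalIntegrable_iff_integrableOn_Ioc_of_le (by linarith)]
    exact (hi c hcp).mono_set Ioc_subset_Ioi_self
  have hmeas : StronglyMeasurableAtFilter f (𝓝 p) :=
    ⟨Ioi 0, Ioi_mem_nhds hp, hc.aestronglyMeasurable measurableSet_Ioi⟩
  have hca : ContinuousAt f p := hc.continuousAt (Ioi_mem_nhds hp)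
  have hd := intervalIntegral.integral_hasDerivAt_right hint hmeas hca
  have hd2 : HasDerivAt (fun q => (∫ r in Ioi c, f r) - ∫ t in c..q, f t) (-f p) p := by
    have := (hasDerivAt_const p (∫ r in Ioi c, f r)).sub hd
    simpa [Pi.sub_def] using this
  exact hd2.congr_of_eventuallyEq <|
    eventually_of_mem (Ioi_mem_nhds hp) fun x hx => key x hx

/-- helper for dividing weighted bounds by `r`. -/
lemma div_bound {r a g M : ℝ} (hr : 0 < r) (h : r ^ a * g ≤ M) :
    g / r ≤ M * r ^ (-a - 1) := by
  have hra : (0:ℝ) < r ^ a := Real.rpow_pos_of_pos hr a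
  have h1 : g ≤ M * r ^ (-a) := by
    calc g ≤ M / r ^ a := (le_div_iff₀' hra).mpr h
      _ = M * r ^ (-a) := by rw [Real.rpow_neg hr.le, div_eq_mul_inv]
  rw [div_le_iff₀ hr]
  calc g ≤ M * r ^ (-a) := h1
    _ = M * r ^ (-a - 1) * r := by
        rw [mul_assoc, ← Real.rpow_add_one hr.ne']; ring_nf

/-- **Continuity of `A_ρ`** (Lemma 3.1): `A_ρ : X¹_{μ,χ} → X²_{μ,χ}` is
well-defined and continuous. -/
theorem Arho_continuous
    (ρ μ χ : ℝ) (hρ : ρ ∈ Set.Ioo (0:ℝ) 1)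
    (hμ0 : 0 ≤ μ) (hμ : μ < min ρ (1 - ρ)) (hχ : 0 < χ) :
    ∃ C : ℝ, 0 < C ∧ ∀ G : ℝ → ℝ, MemX ρ 1 μ χ G →
      (∀ p : ℝ, 0 < p →
        MeasureTheory.IntegrableOn (fun r => deriv G r / r) (Set.Ioi p)) ∧
      (∀ q : ℝ, 0 ≤ q →
        MeasureTheory.IntegrableOn
          (fun p => ∫ r in Set.Ioi p, deriv G r / r) (Set.Ioi q)) ∧
      MemX ρ 2 μ χ (Arho ρ G) ∧
      fullN ρ 2 μ χ (Arho ρ G) ≤ C * fullN ρ 1 μ χ G := by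
  obtain ⟨hρ0, hρ1⟩ := hρ
  have hμρ : μ < ρ := lt_of_lt_of_le hμ (min_le_left _ _)
  have hμ1 : μ < 1 - ρ := lt_of_lt_of_le hμ (min_le_right _ _)
  have hν0 : 0 < ρ + μ := by linarith
  have hν1 : ρ + μ < 1 := by linarith
  have he0 : 0 < χ + μ + ρ := by linarith
  set c1 : ℝ := 1 / (1 - (ρ + μ)) with hc1_def
  set c2 : ℝ := 1 / (χ + 1) with hc2_def
  have hc1 : 0 < c1 := by rw [hc1_def]; exact one_div_pos.mpr (by linarith)
  have hc2 : 0 < c2 := by rw [hc2_def]; exact one_div_pos.mpr (by linarith)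
  set CB0 : ℝ := 2 ^ χ * (c1 / (ρ + μ) + c2 / χ) with hCB0_def
  set CB1 : ℝ := 2 ^ (χ + μ + ρ) * max c1 c2 with hCB1_def
  have hCB0 : 0 < CB0 := by
    rw [hCB0_def]; positivity
  have hCB1 : 0 < CB1 := by
    rw [hCB1_def]
    exact mul_pos (Real.rpow_pos_of_pos two_pos _) (lt_max_iff.mpr (Or.inl hc1))
  set C : ℝ := (1 - ρ) * (CB0 + CB1 + 1) + 1 with hC_def
  have hC : 0 < C := by
    have h1ρ : 0 < 1 - ρ := by linarith
    rw [hC_def]; positivity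
  refine ⟨C, hC, ?_⟩
  intro G hG
  obtain ⟨hSm, ⟨M0, hM0⟩, hℓ⟩ := hG
  obtain ⟨M1, hM1⟩ := hℓ 1 (by decide)
  haveI : Nonempty ↥(Ioi (0:ℝ)) := ⟨⟨1, by norm_num⟩⟩
  set M : ℝ := semN ρ 1 μ χ G with hM_def
  have hbdd1 : BddAbove (range fun q : Ioi (0:ℝ) => wq ρ 1 μ χ G q) := by
    refine ⟨M1, ?_⟩
    rintro x ⟨⟨q, hq⟩, rfl⟩
    exact hM1 q hq
  have hwle : ∀ q : ℝ, 0 < q → wq ρ 1 μ χ G q ≤ M := fun q hq =>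
    le_ciSup hbdd1 (⟨q, hq⟩ : Ioi (0:ℝ))
  have hwq_nonneg : ∀ (k : ℕ) (μ' : ℝ) (F : ℝ → ℝ) (q : ℝ), 0 ≤ q →
      0 ≤ wq ρ k μ' χ F q := by
    intro k μ' F q hq
    exact mul_nonneg (mul_nonneg (Real.rpow_nonneg (by linarith) _)
      (Real.rpow_nonneg hq _)) (abs_nonneg _)
  have hM_nonneg : 0 ≤ M :=
    le_trans (hwq_nonneg 1 μ G 1 one_pos.le) (hwle 1 one_pos)
  -- clean form of the weighted bound on `deriv G`
  have hw' : ∀ q : ℝ, 0 < q →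
      (1 + q) ^ (χ + μ + ρ) * q ^ ((1:ℝ) - ρ - μ) * |deriv G q| ≤ M := by
    intro q hq
    have := hwle q hq
    rw [wq, Function.iterate_one] at this
    push_cast at this
    exact this
  -- pointwise bounds on f = deriv G / r
  have hf1 : ∀ r : ℝ, 0 < r → |deriv G r / r| ≤ M * r ^ ((ρ + μ) - 2) := by
    intro r hr
    have h1A : (1:ℝ) ≤ (1 + r) ^ (χ + μ + ρ) :=
      Real.one_le_rpow (by linarith) he0.le
    have hBpos : (0:ℝ) < r ^ ((1:ℝ) - ρ - μ) := Real.rpow_pos_of_pos hr _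
    have h2 : r ^ ((1:ℝ) - ρ - μ) * |deriv G r| ≤ M := by
      calc r ^ ((1:ℝ) - ρ - μ) * |deriv G r|
          = 1 * (r ^ ((1:ℝ) - ρ - μ) * |deriv G r|) := by ring
        _ ≤ (1 + r) ^ (χ + μ + ρ) * (r ^ ((1:ℝ) - ρ - μ) * |deriv G r|) := by
            apply mul_le_mul_of_nonneg_right h1A
            positivity
        _ = (1 + r) ^ (χ + μ + ρ) * r ^ ((1:ℝ) - ρ - μ) * |deriv G r| := by ring
        _ ≤ M := hw' r hr
    have h3 := div_bound hr h2
    rw [abs_div, abs_of_pos hr]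
    rw [show -((1:ℝ) - ρ - μ) - 1 = (ρ + μ) - 2 by ring] at h3
    exact h3
  have hf2 : ∀ r : ℝ, 1 ≤ r → |deriv G r / r| ≤ M * r ^ (-χ - 2) := by
    intro r hr
    have hr0 : (0:ℝ) < r := lt_of_lt_of_le one_pos hr
    have hbase : r ^ (χ + μ + ρ) ≤ (1 + r) ^ (χ + μ + ρ) :=
      Real.rpow_le_rpow hr0.le (by linarith) he0.le
    have h2 : r ^ (χ + 1) * |deriv G r| ≤ M := by
      calc r ^ (χ + 1) * |deriv G r|
          = r ^ (χ + μ + ρ) * r ^ ((1:ℝ) - ρ - μ) * |deriv G r| := by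
            rw [← Real.rpow_add hr0]; ring_nf
        _ ≤ (1 + r) ^ (χ + μ + ρ) * r ^ ((1:ℝ) - ρ - μ) * |deriv G r| := by
            apply mul_le_mul_of_nonneg_right (mul_le_mul_of_nonneg_right hbase _)
              (abs_nonneg _)
            positivity
        _ ≤ M := hw' r hr0
    have h3 := div_bound hr0 h2
    rw [abs_div, abs_of_pos hr0]
    rw [show -(χ + 1) - 1 = -χ - 2 by ring] at h3
    exact h3
  -- the inner function
  set f : ℝ → ℝ := fun r => deriv G r / r with hf_def
  have hfc : ContinuousOn f (Ioi 0) := by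
    intro x hx
    exact (((hSm.2.2 x hx).continuousAt).div continuousAt_id
      (ne_of_gt hx)).continuousWithinAt
  have hfi : ∀ p : ℝ, 0 < p → IntegrableOn f (Ioi p) := by
    intro p hp
    have hint : IntegrableOn (fun r : ℝ => M * r ^ ((ρ + μ) - 2)) (Ioi p) :=
      (integrableOn_Ioi_rpow_of_lt (by linarith) hp).const_mul M
    refine Integrable.mono' hint
      ((hfc.mono (Ioi_subset_Ioi hp.le)).aestronglyMeasurable measurableSet_Ioi) ?_
    filter_upwards [ae_restrict_mem measurableSet_Ioi] with r hr
    rw [Real.norm_eq_abs]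
    exact hf1 r (hp.trans hr)
  -- the once-integrated function
  set H : ℝ → ℝ := fun p => ∫ r in Ioi p, f r with hH_def
  have hH1 : ∀ p : ℝ, 0 < p → |H p| ≤ M * c1 * p ^ ((ρ + μ) - 1) := by
    intro p hp
    have hint : IntegrableOn (fun r : ℝ => M * r ^ ((ρ + μ) - 2)) (Ioi p) :=
      (integrableOn_Ioi_rpow_of_lt (by linarith) hp).const_mul M
    have hb : ∀ᵐ r ∂(volume.restrict (Ioi p)), ‖f r‖ ≤ M * r ^ ((ρ + μ) - 2) := by
      filter_upwards [ae_restrict_mem measurableSet_Ioi] with r hr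
      rw [Real.norm_eq_abs]; exact hf1 r (hp.trans hr)
    calc |H p| = ‖∫ r in Ioi p, f r‖ := (Real.norm_eq_abs _).symm
      _ ≤ ∫ r in Ioi p, M * r ^ ((ρ + μ) - 2) := norm_integral_le_of_norm_le hint hb
      _ = M * ∫ r in Ioi p, r ^ ((ρ + μ) - 2) := integral_const_mul M _
      _ = M * (-p ^ ((ρ + μ) - 2 + 1) / ((ρ + μ) - 2 + 1)) := by
          rw [integral_Ioi_rpow_of_lt (by linarith) hp]
      _ = M * c1 * p ^ ((ρ + μ) - 1) := by
          rw [show (ρ + μ) - 2 + 1 = (ρ + μ) - 1 by ring, hc1_def, neg_div,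
            div_eq_mul_inv,
            show ((ρ + μ) - 1)⁻¹ = -(1 - (ρ + μ))⁻¹ by
              rw [show (ρ + μ) - 1 = -(1 - (ρ + μ)) by ring, inv_neg]]
          ring
  have hH2 : ∀ p : ℝ, 1 ≤ p → |H p| ≤ M * c2 * p ^ (-χ - 1) := by
    intro p hp
    have hp0 : (0:ℝ) < p := lt_of_lt_of_le one_pos hp
    have hint : IntegrableOn (fun r : ℝ => M * r ^ (-χ - 2)) (Ioi p) :=
      (integrableOn_Ioi_rpow_of_lt (by linarith) hp0).const_mul M
    have hb : ∀ᵐ r ∂(volume.restrict (Ioi p)), ‖f r‖ ≤ M * r ^ (-χ - 2) := by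
      filter_upwards [ae_restrict_mem measurableSet_Ioi] with r hr
      rw [Real.norm_eq_abs]; exact hf2 r (hp.trans hr.le)
    calc |H p| = ‖∫ r in Ioi p, f r‖ := (Real.norm_eq_abs _).symm
      _ ≤ ∫ r in Ioi p, M * r ^ (-χ - 2) := norm_integral_le_of_norm_le hint hb
      _ = M * ∫ r in Ioi p, r ^ (-χ - 2) := integral_const_mul M _
      _ = M * (-p ^ (-χ - 2 + 1) / (-χ - 2 + 1)) := by
          rw [integral_Ioi_rpow_of_lt (by linarith) hp0]
      _ = M * c2 * p ^ (-χ - 1) := by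
          rw [show -χ - 2 + 1 = -χ - 1 by ring, hc2_def, neg_div, div_eq_mul_inv,
            show (-χ - 1)⁻¹ = -(χ + 1)⁻¹ by
              rw [show -χ - 1 = -(χ + 1) by ring, inv_neg]]
          ring
  have hHd : ∀ p : ℝ, 0 < p → HasDerivAt H (-f p) p := fun p hp =>
    tail_hasDerivAt f hfc hfi hp
  have hHc : ContinuousOn H (Ioi 0) := fun p hp =>
    (hHd p hp).continuousAt.continuousWithinAt
  have hHi0 : IntegrableOn H (Ioi 0) := by
    rw [← Ioc_union_Ioi_eq_Ioi (zero_le_one)]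
    refine IntegrableOn.union ?_ ?_
    · have hint : IntegrableOn (fun p : ℝ => M * c1 * p ^ ((ρ + μ) - 1)) (Ioc 0 1) :=
        ((intervalIntegral.intervalIntegrable_rpow'
          (a := 0) (b := 1) (by linarith : (-1:ℝ) < (ρ + μ) - 1)).1).const_mul (M * c1)
      refine Integrable.mono' hint
        ((hHc.mono Ioc_subset_Ioi_self).aestronglyMeasurable measurableSet_Ioc) ?_
      filter_upwards [ae_restrict_mem measurableSet_Ioc] with p hp
      rw [Real.norm_eq_abs]
      exact hH1 p hp.1
    · have hint : IntegrableOn (fun p : ℝ => M * c2 * p ^ (-χ - 1)) (Ioi 1) :=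
        (integrableOn_Ioi_rpow_of_lt (by linarith) one_pos).const_mul (M * c2)
      refine Integrable.mono' hint
        ((hHc.mono (Ioi_subset_Ioi zero_le_one)).aestronglyMeasurable measurableSet_Ioi) ?_
      filter_upwards [ae_restrict_mem measurableSet_Ioi] with p hp
      rw [Real.norm_eq_abs]
      exact hH2 p hp.le
  have hHi : ∀ q : ℝ, 0 ≤ q → IntegrableOn H (Ioi q) := fun q hq =>
    hHi0.mono_set (Ioi_subset_Ioi hq)
  -- the outer function
  set F : ℝ → ℝ := fun q => ∫ p in Ioi q, H p with hF_def
  have hA_eq : Arho ρ G = fun q => -(1 - ρ) * F q := by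
    funext q
    simp only [Arho, hF_def, hH_def, hf_def]
  have hFd : ∀ q : ℝ, 0 < q → HasDerivAt F (-H q) q := fun q hq =>
    tail_hasDerivAt H hHc (fun a ha => hHi a ha.le) hq
  have hAd : ∀ q : ℝ, 0 < q → HasDerivAt (Arho ρ G) ((1 - ρ) * H q) q := by
    intro q hq
    rw [hA_eq]
    have := (hFd q hq).const_mul (-(1 - ρ))
    rw [show (1 - ρ) * H q = -(1 - ρ) * -H q by ring]
    exact this
  have hderivA : ∀ q : ℝ, 0 < q → deriv (Arho ρ G) q = (1 - ρ) * H q := fun q hq =>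
    (hAd q hq).deriv
  have heqd : ∀ q : ℝ, 0 < q →
      deriv (Arho ρ G) =ᶠ[𝓝 q] fun x => (1 - ρ) * H x := fun q hq =>
    eventually_of_mem (Ioi_mem_nhds hq) fun x hx => hderivA x hx
  have hA2 : ∀ q : ℝ, 0 < q →
      deriv (deriv (Arho ρ G)) q = -((1 - ρ) * f q) := by
    intro q hq
    rw [(heqd q hq).deriv_eq]
    have h := (hHd q hq).const_mul (1 - ρ)
    rw [h.deriv]
    ring
  have hdiff2 : ∀ q ∈ Ioi (0:ℝ), DifferentiableAt ℝ (deriv (Arho ρ G)) q := by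
    intro q hq
    rw [(heqd q hq).differentiableAt_iff]
    exact ((hHd q hq).const_mul (1 - ρ)).differentiableAt
  -- continuity at 0
  have hF0 : ContinuousWithinAt F (Ioi 0) 0 := by
    have hb : ∀ q ∈ Ioi (0:ℝ), ‖F q - F 0‖ ≤ M * c1 * q ^ (ρ + μ) / (ρ + μ) := by
      intro q hq
      have hsplit := tail_split H hq.le (hHi 0 le_rfl)
      have hFq : F 0 - F q = ∫ p in Ioc 0 q, H p := by
        rw [hF_def]; simp only; rw [hsplit]; ring
      have hint : IntegrableOn (fun p : ℝ => M * c1 * p ^ ((ρ + μ) - 1)) (Ioc 0 q) :=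
        ((intervalIntegral.intervalIntegrable_rpow'
          (a := 0) (b := q) (by linarith : (-1:ℝ) < (ρ + μ) - 1)).1).const_mul (M * c1)
      have hbnd : ∀ᵐ p ∂(volume.restrict (Ioc 0 q)),
          ‖H p‖ ≤ M * c1 * p ^ ((ρ + μ) - 1) := by
        filter_upwards [ae_restrict_mem measurableSet_Ioc] with p hp
        rw [Real.norm_eq_abs]; exact hH1 p hp.1
      have h1 : ‖F q - F 0‖ = ‖∫ p in Ioc 0 q, H p‖ := by
        rw [← hFq, norm_sub_rev]
      rw [h1]
      calc ‖∫ p in Ioc 0 q, H p‖ ≤ ∫ p in Ioc 0 q, M * c1 * p ^ ((ρ + μ) - 1) :=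
            norm_integral_le_of_norm_le hint hbnd
        _ = M * c1 * ∫ p in Ioc 0 q, p ^ ((ρ + μ) - 1) := integral_const_mul _ _
        _ = M * c1 * q ^ (ρ + μ) / (ρ + μ) := by
            rw [← intervalIntegral.integral_of_le hq.out.le,
              integral_rpow (Or.inl (by linarith))]
            rw [show (ρ + μ) - 1 + 1 = ρ + μ by ring,
              Real.zero_rpow (ne_of_gt hν0)]
            ring
    have hb0 : Tendsto (fun q : ℝ => M * c1 * q ^ (ρ + μ) / (ρ + μ)) (𝓝[>] 0) (𝓝 0) := by
      have h1 : Tendsto (fun q : ℝ => q ^ (ρ + μ)) (𝓝 0) (𝓝 0) := by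
        have := (Real.continuousAt_rpow_const 0 (ρ + μ) (Or.inr hν0.le)).tendsto
        rwa [Real.zero_rpow (ne_of_gt hν0)] at this
      have h2 : Tendsto (fun q : ℝ => M * c1 * q ^ (ρ + μ) / (ρ + μ)) (𝓝[>] (0:ℝ))
          (𝓝 (M * c1 * 0 / (ρ + μ))) :=
        ((h1.const_mul (M * c1)).div_const (ρ + μ)).mono_left nhdsWithin_le_nhds
      simpa using h2
    have hsub : Tendsto (fun q => F q - F 0) (𝓝[>] 0) (𝓝 0) := by
      apply squeeze_zero_norm' _ hb0
      filter_upwards [self_mem_nhdsWithin] with q hq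
      exact hb q hq
    have := hsub.add_const (F 0)
    simpa [ContinuousWithinAt] using this
  have hScont : ContinuousOn (Arho ρ G) (Ici 0) := by
    intro x hx
    rcases eq_or_lt_of_le (Set.mem_Ici.mp hx : (0:ℝ) ≤ x) with h0 | hxpos
    · subst h0
      rw [← continuousWithinAt_Ioi_iff_Ici, hA_eq]
      exact (continuousWithinAt_const.mul hF0)
    · exact (hAd x hxpos).continuousAt.continuousWithinAt
  -- weighted bounds for Arho
  have hbound2 : ∀ q : ℝ, 0 < q → wq ρ 2 μ χ (Arho ρ G) q ≤ (1 - ρ) * M := by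
    intro q hq
    rw [wq]
    have hit : deriv^[2] (Arho ρ G) q = deriv (deriv (Arho ρ G)) q := by
      simp [Function.iterate_succ, Function.iterate_one]
    rw [hit, hA2 q hq]
    have habs : |(-((1 - ρ) * f q))| = (1 - ρ) * (|deriv G q| / q) := by
      rw [abs_neg, abs_mul, abs_of_nonneg (by linarith : (0:ℝ) ≤ 1 - ρ), hf_def]
      simp only
      rw [abs_div, abs_of_pos hq]
    rw [habs]
    have hsplit : q ^ (((2:ℕ):ℝ) - ρ - μ) = q ^ ((1:ℝ) - ρ - μ) * q := by
      rw [show ((2:ℕ):ℝ) - ρ - μ = ((1:ℝ) - ρ - μ) + 1 by push_cast; ring,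
        Real.rpow_add_one hq.ne']
    calc (1 + q) ^ (χ + μ + ρ) * q ^ (((2:ℕ):ℝ) - ρ - μ) *
          ((1 - ρ) * (|deriv G q| / q))
        = (1 - ρ) * ((1 + q) ^ (χ + μ + ρ) * q ^ ((1:ℝ) - ρ - μ) * |deriv G q|) := by
          rw [hsplit]; field_simp
      _ ≤ (1 - ρ) * M :=
          mul_le_mul_of_nonneg_left (hw' q hq) (by linarith)
  have hbound1 : ∀ q : ℝ, 0 < q → wq ρ 1 μ χ (Arho ρ G) q ≤ (1 - ρ) * (CB1 * M) := by
    intro q hq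
    rw [wq, Function.iterate_one, hderivA q hq]
    have habs : |(1 - ρ) * H q| = (1 - ρ) * |H q| := by
      rw [abs_mul, abs_of_nonneg (by linarith : (0:ℝ) ≤ 1 - ρ)]
    rw [habs]
    push_cast
    rcases le_total q 1 with hq1 | hq1
    · calc (1 + q) ^ (χ + μ + ρ) * q ^ ((1:ℝ) - ρ - μ) * ((1 - ρ) * |H q|)
          ≤ 2 ^ (χ + μ + ρ) * q ^ ((1:ℝ) - ρ - μ) *
              ((1 - ρ) * (M * c1 * q ^ ((ρ + μ) - 1))) := by
            gcongr <;> first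
              | exact mul_nonneg (by linarith) (abs_nonneg _)
              | positivity
              | exact Real.rpow_le_rpow (by linarith) (by linarith) he0.le
              | exact hH1 q hq
              | linarith
        _ = 2 ^ (χ + μ + ρ) * (1 - ρ) * (M * c1) *
              (q ^ ((1:ℝ) - ρ - μ) * q ^ ((ρ + μ) - 1)) := by ring
        _ = 2 ^ (χ + μ + ρ) * (1 - ρ) * (M * c1) := by
            rw [← Real.rpow_add hq, show (1:ℝ) - ρ - μ + ((ρ + μ) - 1) = 0 by ring,
              Real.rpow_zero, mul_one]
        _ ≤ (1 - ρ) * (CB1 * M) := by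
            rw [hCB1_def]
            have h1 : M * c1 ≤ M * max c1 c2 :=
              mul_le_mul_of_nonneg_left (le_max_left _ _) hM_nonneg
            have h2 : (0:ℝ) ≤ 2 ^ (χ + μ + ρ) := Real.rpow_nonneg (by norm_num) _
            nlinarith [mul_le_mul_of_nonneg_left h1 h2]
    · have hq0 : (0:ℝ) < q := hq
      calc (1 + q) ^ (χ + μ + ρ) * q ^ ((1:ℝ) - ρ - μ) * ((1 - ρ) * |H q|)
          ≤ (2 * q) ^ (χ + μ + ρ) * q ^ ((1:ℝ) - ρ - μ) *
              ((1 - ρ) * (M * c2 * q ^ (-χ - 1))) := by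
            gcongr <;> first
              | exact mul_nonneg (by linarith) (abs_nonneg _)
              | positivity
              | exact Real.rpow_le_rpow (by linarith) (by linarith) he0.le
              | exact hH2 q hq1
              | linarith
        _ = 2 ^ (χ + μ + ρ) * (1 - ρ) * (M * c2) *
              (q ^ (χ + μ + ρ) * q ^ ((1:ℝ) - ρ - μ) * q ^ (-χ - 1)) := by
            rw [Real.mul_rpow (by norm_num) hq0.le]; ring
        _ = 2 ^ (χ + μ + ρ) * (1 - ρ) * (M * c2) := by
            rw [← Real.rpow_add hq0, ← Real.rpow_add hq0,
              show χ + μ + ρ + ((1:ℝ) - ρ - μ) + (-χ - 1) = 0 by ring,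
              Real.rpow_zero, mul_one]
        _ ≤ (1 - ρ) * (CB1 * M) := by
            rw [hCB1_def]
            have h1 : M * c2 ≤ M * max c1 c2 :=
              mul_le_mul_of_nonneg_left (le_max_right _ _) hM_nonneg
            have h2 : (0:ℝ) ≤ 2 ^ (χ + μ + ρ) := Real.rpow_nonneg (by norm_num) _
            nlinarith [mul_le_mul_of_nonneg_left h1 h2]
  -- bound on F for q ≥ 1
  have hF1 : ∀ q : ℝ, 1 ≤ q → |F q| ≤ M * c2 * q ^ (-χ) / χ := by
    intro q hq
    have hq0 : (0:ℝ) < q := lt_of_lt_of_le one_pos hq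
    have hint : IntegrableOn (fun p : ℝ => M * c2 * p ^ (-χ - 1)) (Ioi q) :=
      (integrableOn_Ioi_rpow_of_lt (by linarith) hq0).const_mul (M * c2)
    have hbnd : ∀ᵐ p ∂(volume.restrict (Ioi q)),
        ‖H p‖ ≤ M * c2 * p ^ (-χ - 1) := by
      filter_upwards [ae_restrict_mem measurableSet_Ioi] with p hp
      rw [Real.norm_eq_abs]; exact hH2 p (hq.trans hp.le)
    calc |F q| = ‖∫ p in Ioi q, H p‖ := (Real.norm_eq_abs _).symm
      _ ≤ ∫ p in Ioi q, M * c2 * p ^ (-χ - 1) := norm_integral_le_of_norm_le hint hbnd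
      _ = M * c2 * ∫ p in Ioi q, p ^ (-χ - 1) := integral_const_mul _ _
      _ = M * c2 * (-q ^ (-χ - 1 + 1) / (-χ - 1 + 1)) := by
          rw [integral_Ioi_rpow_of_lt (by linarith) hq0]
      _ = M * c2 * q ^ (-χ) / χ := by
          rw [show -χ - 1 + 1 = -χ by ring, neg_div, div_eq_mul_inv, inv_neg]
          ring
  have hbound0 : ∀ q : ℝ, 0 < q → wq ρ 0 (-ρ) χ (Arho ρ G) q ≤ (1 - ρ) * (CB0 * M) := by
    intro q hq
    have hw0 : wq ρ 0 (-ρ) χ (Arho ρ G) q = (1 + q) ^ χ * |Arho ρ G q| := by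
      rw [wq]
      simp only [Function.iterate_zero, id_eq, CharP.cast_eq_zero]
      rw [show χ + -ρ + ρ = χ by ring, show (0:ℝ) - ρ - -ρ = 0 by ring,
        Real.rpow_zero, mul_one]
    have habsA : |Arho ρ G q| = (1 - ρ) * |F q| := by
      rw [hA_eq]
      simp only
      rw [abs_mul, abs_neg, abs_of_nonneg (by linarith : (0:ℝ) ≤ 1 - ρ)]
    rw [hw0, habsA]
    rcases le_total 1 q with hq1 | hq1
    · have hF := hF1 q hq1
      calc (1 + q) ^ χ * ((1 - ρ) * |F q|)
          ≤ (2 * q) ^ χ * ((1 - ρ) * (M * c2 * q ^ (-χ) / χ)) := by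
            gcongr <;> first
              | exact mul_nonneg (by linarith) (abs_nonneg _)
              | positivity
              | exact Real.rpow_le_rpow (by linarith) (by linarith) hχ.le
              | exact hF1 q hq1
              | linarith
        _ = 2 ^ χ * (1 - ρ) * (M * c2 / χ) * (q ^ χ * q ^ (-χ)) := by
            rw [Real.mul_rpow (by norm_num) hq.le]; ring
        _ = 2 ^ χ * (1 - ρ) * (M * c2 / χ) := by
            rw [← Real.rpow_add hq, show χ + -χ = 0 by ring, Real.rpow_zero, mul_one]
        _ ≤ (1 - ρ) * (CB0 * M) := by
            rw [hCB0_def]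
            have h2 : (0:ℝ) ≤ 2 ^ χ := (Real.rpow_pos_of_pos two_pos χ).le
            have h3 : 0 ≤ c1 / (ρ + μ) := by positivity
            have h4 : 0 ≤ (1 - ρ) * (2 ^ χ * (M * (c1 / (ρ + μ)))) :=
              mul_nonneg (by linarith) (mul_nonneg h2 (mul_nonneg hM_nonneg h3))
            linarith [show (1 - ρ) * (2 ^ χ * (c1 / (ρ + μ) + c2 / χ) * M) -
                2 ^ χ * (1 - ρ) * (M * c2 / χ) =
                (1 - ρ) * (2 ^ χ * (M * (c1 / (ρ + μ)))) from by ring]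
    · -- q ≤ 1 : split the integral at 1
      have hsplit := tail_split H hq1 (hHi q hq.le)
      have hFq : F q = (∫ p in Ioc q 1, H p) + F 1 := by
        rw [hF_def]; simp only; rw [hsplit]
      have hint1 : IntegrableOn (fun p : ℝ => M * c1 * p ^ ((ρ + μ) - 1)) (Ioc 0 1) :=
        ((intervalIntegral.intervalIntegrable_rpow'
          (a := 0) (b := 1) (by linarith : (-1:ℝ) < (ρ + μ) - 1)).1).const_mul (M * c1)
      have hintq : IntegrableOn (fun p : ℝ => M * c1 * p ^ ((ρ + μ) - 1)) (Ioc q 1) :=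
        hint1.mono_set (Ioc_subset_Ioc_left hq.le)
      have hbnd : ∀ᵐ p ∂(volume.restrict (Ioc q 1)),
          ‖H p‖ ≤ M * c1 * p ^ ((ρ + μ) - 1) := by
        filter_upwards [ae_restrict_mem measurableSet_Ioc] with p hp
        rw [Real.norm_eq_abs]; exact hH1 p (hq.trans hp.1)
      have hIoc : |∫ p in Ioc q 1, H p| ≤ M * c1 / (ρ + μ) := by
        calc |∫ p in Ioc q 1, H p| ≤ ∫ p in Ioc q 1, M * c1 * p ^ ((ρ + μ) - 1) := by
              rw [← Real.norm_eq_abs]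
              exact norm_integral_le_of_norm_le hintq hbnd
          _ ≤ ∫ p in Ioc 0 1, M * c1 * p ^ ((ρ + μ) - 1) := by
              apply setIntegral_mono_set hint1
              · filter_upwards [ae_restrict_mem measurableSet_Ioc] with p hp
                have : (0:ℝ) < p := hp.1
                positivity
              · exact HasSubset.Subset.eventuallyLE (Ioc_subset_Ioc_left hq.le)
          _ = M * c1 * ∫ p in Ioc 0 1, p ^ ((ρ + μ) - 1) := integral_const_mul _ _
          _ = M * c1 / (ρ + μ) := by
              rw [← intervalIntegral.integral_of_le zero_le_one,
                integral_rpow (Or.inl (by linarith))]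
              rw [show (ρ + μ) - 1 + 1 = ρ + μ by ring,
                Real.zero_rpow (ne_of_gt hν0), Real.one_rpow]
              ring
      have hF1' : |F 1| ≤ M * c2 / χ := by
        have := hF1 1 le_rfl
        rwa [Real.one_rpow, mul_one] at this
      have hFb : |F q| ≤ M * c1 / (ρ + μ) + M * c2 / χ := by
        rw [hFq]
        calc |(∫ p in Ioc q 1, H p) + F 1| ≤ |∫ p in Ioc q 1, H p| + |F 1| := abs_add_le _ _
          _ ≤ M * c1 / (ρ + μ) + M * c2 / χ := add_le_add hIoc hF1'
      calc (1 + q) ^ χ * ((1 - ρ) * |F q|)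
          ≤ 2 ^ χ * ((1 - ρ) * (M * c1 / (ρ + μ) + M * c2 / χ)) := by
            gcongr <;> first
              | exact mul_nonneg (by linarith) (abs_nonneg _)
              | positivity
              | exact Real.rpow_le_rpow (by linarith) (by linarith) hχ.le
              | exact hFb
              | linarith
        _ = (1 - ρ) * (CB0 * M) := by
            rw [hCB0_def]; field_simp
  -- assemble
  have hMemX : MemX ρ 2 μ χ (Arho ρ G) := by
    refine ⟨⟨hScont, fun x hx => (hAd x hx).differentiableAt, hdiff2⟩,
      ⟨(1 - ρ) * (CB0 * M), hbound0⟩, ?_⟩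
    intro ℓ hℓ
    rw [Finset.mem_Icc] at hℓ
    obtain ⟨hℓ1, hℓ2⟩ := hℓ
    interval_cases ℓ
    · exact ⟨(1 - ρ) * (CB1 * M), hbound1⟩
    · exact ⟨(1 - ρ) * M, hbound2⟩
  refine ⟨hfi, fun q hq => hHi q hq, hMemX, ?_⟩
  -- the norm bound
  have hsem0A : semN ρ 0 (-ρ) χ (Arho ρ G) ≤ (1 - ρ) * (CB0 * M) :=
    ciSup_le fun q => hbound0 q q.2
  have hsem1A : semN ρ 1 μ χ (Arho ρ G) ≤ (1 - ρ) * (CB1 * M) :=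
    ciSup_le fun q => hbound1 q q.2
  have hsem2A : semN ρ 2 μ χ (Arho ρ G) ≤ (1 - ρ) * M :=
    ciSup_le fun q => hbound2 q q.2
  have hbdd0 : BddAbove (range fun q : Ioi (0:ℝ) => wq ρ 0 (-ρ) χ G q) := by
    refine ⟨M0, ?_⟩
    rintro x ⟨⟨q, hq⟩, rfl⟩
    exact hM0 q hq
  have hsem0G : 0 ≤ semN ρ 0 (-ρ) χ G :=
    le_trans (hwq_nonneg 0 (-ρ) G 1 one_pos.le)
      (le_ciSup hbdd0 (⟨1, Set.mem_Ioi.mpr one_pos⟩ : Ioi (0:ℝ)))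
  have hfull2 : fullN ρ 2 μ χ (Arho ρ G) =
      semN ρ 0 (-ρ) χ (Arho ρ G) + (semN ρ 1 μ χ (Arho ρ G) + semN ρ 2 μ χ (Arho ρ G)) := by
    rw [fullN, Finset.sum_Icc_succ_top (by norm_num), Finset.Icc_self,
      Finset.sum_singleton]
  have hfull1 : fullN ρ 1 μ χ G = semN ρ 0 (-ρ) χ G + M := by
    rw [fullN, Finset.Icc_self, Finset.sum_singleton, hM_def]
  rw [hfull2, hfull1, hC_def]
  have h1ρ : (0:ℝ) ≤ 1 - ρ := by linarith
  nlinarith [mul_nonneg (mul_nonneg h1ρ (by linarith : (0:ℝ) ≤ CB0 + CB1 + 1)) hsem0G,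
    mul_nonneg h1ρ hM_nonneg, hsem0G, hM_nonneg,
    mul_nonneg hsem0G hM_nonneg]
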